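/- arXiv:1504.05103 — 4 statements merged into one kernel-verified Lean document; each statement's English description precedes it below -/
import Mathlib

section
/- Let I ≥ 0 and T_Q ≥ 0 be independent random variables with finite second moments, and define W = max(T_Q - I, 0). Then E[I·W] ≤ E[I]·E[W] + E[I]². -/
open MeasureTheory ProbabilityTheory

/-- For independent nonnegative random variables `I, T_Q` with finite
second moments and `W = max(T_Q - I, 0)`, we have `E[I·W] ≤ E[I]·E[W] + E[I]²`. -/
theorem stmt2 {Ω : Type*} [MeasureSpace Ω] [IsProbabilityMeasure (ℙ : Measure Ω)]
    (I TQ : Ω → ℝ) (hImeas : Measurable I) (hTQmeas : Measurable TQ)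
    (hInn : ∀ ω, 0 ≤ I ω) (hTQnn : ∀ ω, 0 ≤ TQ ω)
    (hind : IndepFun I TQ)
    (hIint : Integrable I) (hI2 : Integrable (fun ω => I ω ^ 2))
    (hTQint : Integrable TQ)
    (W : Ω → ℝ) (hW : W = fun ω => max (TQ ω - I ω) 0)
    (hWint : Integrable W) (hIW : Integrable (fun ω => I ω * W ω)) :
    (∫ ω, I ω * W ω) ≤ (∫ ω, I ω) * (∫ ω, W ω) + (∫ ω, I ω) ^ 2 := by
  have hITQint : Integrable (fun ω => I ω * TQ ω) := hind.integrable_mul hIint hTQint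
  have hWle : ∀ ω, W ω ≤ TQ ω := by
    intro ω; rw [hW]
    exact max_le (by linarith [hInn ω]) (hTQnn ω)
  have h1 : (∫ ω, I ω * W ω) ≤ ∫ ω, I ω * TQ ω :=
    integral_mono hIW hITQint fun ω => mul_le_mul_of_nonneg_left (hWle ω) (hInn ω)
  have h2 : (∫ ω, I ω * TQ ω) = (∫ ω, I ω) * ∫ ω, TQ ω :=
    hind.integral_fun_mul_eq_mul_integral hIint.aestronglyMeasurable hTQint.aestronglyMeasurable
  have hTQle : ∀ ω, TQ ω ≤ W ω + I ω := by
    intro ω; rw [hW]; have := le_max_left (TQ ω - I ω) 0; simp; linarith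
  have h3 : (∫ ω, TQ ω) ≤ (∫ ω, W ω) + ∫ ω, I ω := by
    calc (∫ ω, TQ ω) ≤ ∫ ω, (W ω + I ω) := integral_mono hTQint (hWint.add hIint) hTQle
    _ = (∫ ω, W ω) + ∫ ω, I ω := integral_add hWint hIint
  have hInn' : 0 ≤ ∫ ω, I ω := integral_nonneg hInn
  calc (∫ ω, I ω * W ω) ≤ (∫ ω, I ω) * ∫ ω, TQ ω := h1.trans_eq h2
  _ ≤ (∫ ω, I ω) * ((∫ ω, W ω) + ∫ ω, I ω) := mul_le_mul_of_nonneg_left h3 hInn'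
  _ = (∫ ω, I ω) * (∫ ω, W ω) + (∫ ω, I ω) ^ 2 := by ring
end

section
/- Let I ≥ 0 and T_Q ≥ 0 be independent random variables with finite second moments, and define W = max(T_Q - I, 0). Then E[I·W] ≥ E[I]·E[W] - 2·E[I²]. -/
open MeasureTheory ProbabilityTheory

/-- For independent nonnegative random variables `I, T_Q` with finite
second moments and `W = max(T_Q - I, 0)`, we have `E[I·W] ≥ E[I]·E[W] - 2·E[I²]`. -/
theorem stmt3 {Ω : Type*} [MeasureSpace Ω] [IsProbabilityMeasure (ℙ : Measure Ω)]
    (I TQ : Ω → ℝ) (hImeas : Measurable I) (hTQmeas : Measurable TQ)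
    (hInn : ∀ ω, 0 ≤ I ω) (hTQnn : ∀ ω, 0 ≤ TQ ω)
    (hind : IndepFun I TQ)
    (hIint : Integrable I) (hI2 : Integrable (fun ω => I ω ^ 2))
    (hTQint : Integrable TQ)
    (W : Ω → ℝ) (hW : W = fun ω => max (TQ ω - I ω) 0)
    (hWint : Integrable W) (hIW : Integrable (fun ω => I ω * W ω)) :
    (∫ ω, I ω) * (∫ ω, W ω) - 2 * (∫ ω, (I ω) ^ 2) ≤ ∫ ω, I ω * W ω := by
  have hITQint : Integrable (fun ω => I ω * TQ ω) :=
    hind.integrable_mul hIint hTQint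
  have hmul : ∫ ω, I ω * TQ ω = (∫ ω, I ω) * ∫ ω, TQ ω :=
    hind.integral_fun_mul_eq_mul_integral hIint.aestronglyMeasurable hTQint.aestronglyMeasurable
  have hWle : ∫ ω, W ω ≤ ∫ ω, TQ ω := by
    refine integral_mono hWint hTQint ?_
    intro ω
    rw [hW]
    exact max_le (by linarith [hInn ω]) (hTQnn ω)
  have hkey : ∫ ω, I ω * TQ ω ≤ ∫ ω, (I ω * W ω + I ω ^ 2) := by
    refine integral_mono hITQint (hIW.add hI2) ?_
    intro ω
    have h1 : TQ ω - I ω ≤ W ω := by rw [hW]; exact le_max_left _ _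
    have h2 := mul_le_mul_of_nonneg_left h1 (hInn ω)
    simp only
    nlinarith [h2]
  rw [integral_add hIW hI2] at hkey
  have hI0 : 0 ≤ ∫ ω, I ω := integral_nonneg hInn
  have hI20 : 0 ≤ ∫ ω, (I ω) ^ 2 := integral_nonneg fun ω => sq_nonneg _
  nlinarith [mul_le_mul_of_nonneg_left hWle hI0]
end

section
/- In the multi-class M/G/1/1 system, the quantities Z_{ji} defined by the system Z_{ii} = x_i and Z_{ji} = x_j + 1/λ + Σ_k (λ_k/λ)·Z_{ki} for j ≠ i (where λ = Σ_k λ_k) have the unique solution Z_{ji} = x_j + 1/λ_i + (Σ_k λ_k·x_k)/λ_i for j ≠ i. -/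
/-- Auxiliary: sum computation for any vector `W` with `W i = x i` and
`W k = x k + c` for `k ≠ i`. -/
lemma stmt7_sum_eq (N : ℕ) (lam x : Fin N → ℝ) (lamTot : ℝ)
    (hlamTot : lamTot = ∑ k, lam k) (i : Fin N) (W : Fin N → ℝ) (c : ℝ)
    (hWi : W i = x i) (hW : ∀ k, k ≠ i → W k = x k + c) :
    ∑ k, (lam k / lamTot) * W k
      = (∑ k, lam k * x k) / lamTot + ((lamTot - lam i) / lamTot) * c := by
  have e1 : (∑ k, lam k * x k) = lam i * x i + ∑ k ∈ Finset.univ.erase i, lam k * x k :=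
    (Finset.add_sum_erase _ _ (Finset.mem_univ i)).symm
  have e2 : ∑ k ∈ Finset.univ.erase i, lam k = lamTot - lam i := by
    rw [hlamTot, Finset.sum_erase_eq_sub (Finset.mem_univ i)]
  rw [← Finset.add_sum_erase _ (fun k => (lam k / lamTot) * W k) (Finset.mem_univ i), hWi]
  have e3 : ∑ k ∈ Finset.univ.erase i, (lam k / lamTot) * W k
      = (∑ k ∈ Finset.univ.erase i, lam k * x k) / lamTot
        + ((lamTot - lam i) / lamTot) * c := by
    rw [Finset.sum_div, ← e2, Finset.sum_div, Finset.sum_mul, ← Finset.sum_add_distrib]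
    apply Finset.sum_congr rfl
    intro k hk
    rw [hW k (Finset.ne_of_mem_erase hk)]
    ring
  rw [e3, e1]
  ring

/-- In the multi-class M/G/1/1 system, the system of equations
`Z_{ii} = x_i`, `Z_{ji} = x_j + 1/λ + Σ_k (λ_k/λ)·Z_{ki}` (j ≠ i), with
`λ = Σ_k λ_k`, has the unique solution `Z_{ji} = x_j + 1/λ_i + (Σ_k λ_k x_k)/λ_i`
for `j ≠ i`: the closed form satisfies the equations, and any solution equals it. -/
theorem stmt7 (N : ℕ) (hN : 1 ≤ N) (lam x : Fin N → ℝ)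
    (hlam : ∀ k, 0 < lam k) (hx : ∀ k, 0 < x k)
    (lamTot : ℝ) (hlamTot : lamTot = ∑ k, lam k)
    (Zc : Fin N → Fin N → ℝ)
    (hZc : ∀ j i, Zc j i =
      if j = i then x i else x j + 1 / lam i + (∑ k, lam k * x k) / lam i) :
    ((∀ i, Zc i i = x i) ∧
      (∀ j i, j ≠ i →
        Zc j i = x j + 1 / lamTot + ∑ k, (lam k / lamTot) * Zc k i)) ∧
    (∀ Z : Fin N → Fin N → ℝ,
      (∀ i, Z i i = x i) →
      (∀ j i, j ≠ i →
        Z j i = x j + 1 / lamTot + ∑ k, (lam k / lamTot) * Z k i) →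
      ∀ j i, j ≠ i → Z j i = x j + 1 / lam i + (∑ k, lam k * x k) / lam i) := by
  haveI : Nonempty (Fin N) := Fin.pos_iff_nonempty.mp hN
  have hT : 0 < lamTot := by
    rw [hlamTot]; exact Finset.sum_pos (fun k _ => hlam k) Finset.univ_nonempty
  have hTne : lamTot ≠ 0 := hT.ne'
  constructor
  · constructor
    · intro i; rw [hZc]; simp
    · intro j i hji
      have hS := stmt7_sum_eq N lam x lamTot hlamTot i (fun k => Zc k i)
        (1 / lam i + (∑ k, lam k * x k) / lam i)
        (by show Zc i i = x i; rw [hZc]; simp)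
        (fun k hk => by show Zc k i = _; rw [hZc, if_neg hk]; ring)
      rw [hZc j i, if_neg hji, hS]
      have hli : lam i ≠ 0 := (hlam i).ne'
      field_simp
      ring
  · intro Z h1 h2 j i hji
    have hli : lam i ≠ 0 := (hlam i).ne'
    set S := ∑ k, (lam k / lamTot) * Z k i with hSdef
    have hS := stmt7_sum_eq N lam x lamTot hlamTot i (fun k => Z k i)
      (1 / lamTot + S)
      (h1 i)
      (fun k hk => by show Z k i = x k + (1 / lamTot + S); rw [h2 k i hk, hSdef]; ring)
    simp only [← hSdef] at hS
    have hS2 : S * lamTot * lam i = (∑ k, lam k * x k) * lamTot + (lamTot - lam i) := by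
      apply mul_left_cancel₀ hTne
      field_simp at hS
      linear_combination lamTot * hS
    have hS3 : S = ((∑ k, lam k * x k) * lamTot + (lamTot - lam i)) / (lamTot * lam i) := by
      rw [eq_div_iff (mul_ne_zero hTne hli)]
      linear_combination hS2
    rw [h2 j i hji, ← hSdef, hS3]
    field_simp
    ring
end

section
/- In the M/G/1/1 system, if all entities are identical (x_n = x and C_n = C for all n, with C : ℝ → ℝ nondecreasing), then the uniform rate vector λ_n = λ_max for all n minimizes max_n C(x + (1 + Σ_k λ_k·x)/λ_n) over the box [λ_min, λ_max]^N. -/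
/-- In the M/G/1/1 system with identical entities (common mean
service time `x` and common nondecreasing cost `C`), the uniform rate vector
`λ_n = λ_max` minimizes `max_n C(A_n(λ))` over the box `[λ_min, λ_max]^N`. -/
theorem stmt17 (N : ℕ) (hN : 0 < N) (x lmin lmax : ℝ)
    (hx : 0 < x) (hlmin : 0 < lmin) (hle : lmin ≤ lmax)
    (C : ℝ → ℝ) (hC : Monotone C) :
    ∀ lam : Fin N → ℝ, (∀ k, lmin ≤ lam k ∧ lam k ≤ lmax) →
      Finset.univ.sup' ⟨⟨0, hN⟩, Finset.mem_univ _⟩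
        (fun n : Fin N => C (x + (1 + x * ∑ _k : Fin N, lmax) / lmax)) ≤
      Finset.univ.sup' ⟨⟨0, hN⟩, Finset.mem_univ _⟩
        (fun n : Fin N => C (x + (1 + x * ∑ k, lam k) / lam n)) := by
  intro lam hlam
  have hlmax : 0 < lmax := lt_of_lt_of_le hlmin hle
  -- pick argmin of lam
  obtain ⟨m, -, hm⟩ := Finset.exists_min_image Finset.univ lam ⟨⟨0, hN⟩, Finset.mem_univ _⟩
  have hmpos : 0 < lam m := lt_of_lt_of_le hlmin (hlam m).1
  have hmle : lam m ≤ lmax := (hlam m).2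
  have key : x + (1 + x * ∑ _k : Fin N, lmax) / lmax
      ≤ x + (1 + x * ∑ k, lam k) / lam m := by
    have hsum : (N : ℝ) * lam m ≤ ∑ k, lam k := by
      calc (N : ℝ) * lam m = ∑ _k : Fin N, lam m := by
            simp [Finset.sum_const, mul_comm]
        _ ≤ ∑ k, lam k := Finset.sum_le_sum (fun k _ => hm k (Finset.mem_univ k))
    have h1 : (1 + x * ∑ _k : Fin N, lmax) / lmax
        = 1 / lmax + x * N := by
      field_simp
      simp only [Finset.sum_const, Finset.card_univ, Fintype.card_fin, nsmul_eq_mul]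
      ring
    have h2 : 1 / lmax + x * N ≤ 1 / lam m + x * N := by
      have := one_div_le_one_div_of_le hmpos hmle
      linarith
    have h3 : 1 / lam m + x * N ≤ (1 + x * ∑ k, lam k) / lam m := by
      rw [le_div_iff₀ hmpos]
      have hinv : 1 / lam m * lam m = 1 := one_div_mul_cancel hmpos.ne'
      nlinarith [mul_le_mul_of_nonneg_left hsum hx.le]
    linarith
  exact le_trans (Finset.sup'_le _ _ fun n _ => hC key)
    (Finset.le_sup' (fun n => C (x + (1 + x * ∑ k, lam k) / lam n)) (Finset.mem_univ m))
end
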